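/- For the ring of cliques R_{b,q} with b ≥ 3, q ≥ 3, and for each k = 1, …, ⌈q/2⌉ − 1, the four vectors c^{k,q} ⊗ (ξ₁⁽ᵏ⁾ e₁ + g₁), s^{k,q} ⊗ (ξ₁⁽ᵏ⁾ e₁ + g₁), c^{k,q} ⊗ (ξ₂⁽ᵏ⁾ e₁ + g₁), s^{k,q} ⊗ (ξ₂⁽ᵏ⁾ e₁ + g₁) are nonzero and satisfy Â(c^{k,q} ⊗ (ξ_i⁽ᵏ⁾ e₁ + g₁)) = λ_i⁽ᵏ⁾ · (c^{k,q} ⊗ (ξ_i⁽ᵏ⁾ e₁ + g₁)) and Â(s^{k,q} ⊗ (ξ_i⁽ᵏ⁾ e₁ + g₁)) = λ_i⁽ᵏ⁾ · (s^{k,q} ⊗ (ξ_i⁽ᵏ⁾ e₁ + g₁)) for i = 1, 2. -/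

import Mathlib

open Matrix Finset

/-- Adjacency matrix of the ring of cliques `R_{b,q}`:
`A = I_q ⊗ (1_b 1_bᵀ − I_b) + C_q ⊗ e₁e₁ᵀ`, written entrywise.  Vertices are pairs
`(i, a)` where `i : Fin q` is the block and `a : Fin b` the position within the block;
`a = 0` is the corner vertex of the block. -/
noncomputable def rocAdj (b q : ℕ) : Matrix (Fin q × Fin b) (Fin q × Fin b) ℝ :=
  Matrix.of fun p r =>
    (if p.1 = r.1 ∧ p.2 ≠ r.2 then (1 : ℝ) else 0) +
    (if ((p.1.val + 1) % q = r.1.val ∨ (r.1.val + 1) % q = p.1.val) ∧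
        p.2.val = 0 ∧ r.2.val = 0 then (1 : ℝ) else 0)

/-- Degrees in `R_{b,q}`: the corner of each block has degree `b+1`, internal
vertices have degree `b−1`. -/
noncomputable def rocDeg (b q : ℕ) (p : Fin q × Fin b) : ℝ :=
  if p.2.val = 0 then (b : ℝ) + 1 else (b : ℝ) - 1

/-- Normalized adjacency matrix `Â = D^{−1/2} A D^{−1/2}` of `R_{b,q}`. -/
noncomputable def rocAhat (b q : ℕ) : Matrix (Fin q × Fin b) (Fin q × Fin b) ℝ :=
  Matrix.diagonal (fun p => 1 / Real.sqrt (rocDeg b q p)) * rocAdj b q *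
    Matrix.diagonal (fun p => 1 / Real.sqrt (rocDeg b q p))

/-- `α_k = 2 cos(2πk/q)`. -/
noncomputable def rocAlpha (q k : ℕ) : ℝ := 2 * Real.cos (2 * Real.pi * k / q)

/-- `β_k = (1/2)(α_k √((b−1)/(b+1)) − √(b²−1) + √((b+1)/(b−1)))`. -/
noncomputable def rocBeta (b q k : ℕ) : ℝ :=
  (1 / 2) * (rocAlpha q k * Real.sqrt (((b : ℝ) - 1) / ((b : ℝ) + 1)) -
    Real.sqrt ((b : ℝ) ^ 2 - 1) + Real.sqrt (((b : ℝ) + 1) / ((b : ℝ) - 1)))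

/-- `ξ₁⁽ᵏ⁾ = β_k + √(β_k² + (b−1))`. -/
noncomputable def rocXi1 (b q k : ℕ) : ℝ :=
  rocBeta b q k + Real.sqrt ((rocBeta b q k) ^ 2 + ((b : ℝ) - 1))

/-- `ξ₂⁽ᵏ⁾ = β_k − √(β_k² + (b−1))`. -/
noncomputable def rocXi2 (b q k : ℕ) : ℝ :=
  rocBeta b q k - Real.sqrt ((rocBeta b q k) ^ 2 + ((b : ℝ) - 1))

/-- `λ₁⁽ᵏ⁾ = ξ₁⁽ᵏ⁾/√(b²−1) + 1 − 1/(b−1)`. -/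
noncomputable def rocLam1 (b q k : ℕ) : ℝ :=
  rocXi1 b q k / Real.sqrt ((b : ℝ) ^ 2 - 1) + 1 - 1 / ((b : ℝ) - 1)

/-- `λ₂⁽ᵏ⁾ = ξ₂⁽ᵏ⁾/√(b²−1) + 1 − 1/(b−1)`. -/
noncomputable def rocLam2 (b q k : ℕ) : ℝ :=
  rocXi2 b q k / Real.sqrt ((b : ℝ) ^ 2 - 1) + 1 - 1 / ((b : ℝ) - 1)

/-- Periodic cosine vector `c^{k,q}_j = cos(2πkj/q)`, `j = 1, …, q`. -/
noncomputable def cvec (q k : ℕ) : Fin q → ℝ :=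
  fun j => Real.cos (2 * Real.pi * k * (j.val + 1) / q)

/-- Periodic sine vector `s^{k,q}_j = sin(2πkj/q)`, `j = 1, …, q`. -/
noncomputable def svec (q k : ℕ) : Fin q → ℝ :=
  fun j => Real.sin (2 * Real.pi * k * (j.val + 1) / q)

/-- Block vector `ξ e₁ + g₁ ∈ ℝ^b`. -/
noncomputable def blockVec (b : ℕ) (ξ : ℝ) : Fin b → ℝ :=
  fun a => if a.val = 0 then ξ else 1

/-- Kronecker (tensor) product of vectors: `(y ⊗ z)_{(i,a)} = y_i z_a`. -/
noncomputable def vkron {q b : ℕ} (y : Fin q → ℝ) (z : Fin b → ℝ) : Fin q × Fin b → ℝ :=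
  fun p => y p.1 * z p.2


section rocAux

lemma roc_mod_plus (q : ℕ) (hq : 3 ≤ q) (i : Fin q) :
    (i.val + 1) % q = if i.val + 1 = q then 0 else i.val + 1 := by
  split
  · simp_all
  · exact Nat.mod_eq_of_lt (by omega)

lemma roc_mod_minus (q : ℕ) (hq : 3 ≤ q) (i : Fin q) :
    (i.val + q - 1) % q = if i.val = 0 then q - 1 else i.val - 1 := by
  have hi := i.isLt
  split
  · have h : i.val + q - 1 = q - 1 := by omega
    rw [h]; exact Nat.mod_eq_of_lt (by omega)
  · have h : i.val + q - 1 = q + (i.val - 1) := by omega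
    rw [h, Nat.add_mod_left]
    exact Nat.mod_eq_of_lt (by omega)

lemma roc_cyc_iff (q : ℕ) (hq : 3 ≤ q) (i j : Fin q) :
    (((i.val + 1) % q = j.val ∨ (j.val + 1) % q = i.val)) ↔
      (j = ⟨(i.val+1)%q, Nat.mod_lt _ (by omega)⟩ ∨ j = ⟨(i.val+q-1)%q, Nat.mod_lt _ (by omega)⟩) := by
  have hi := i.isLt
  have hj := j.isLt
  have h3 : (j.val + 1) % q = if j.val + 1 = q then 0 else j.val + 1 := by
    split
    · simp_all
    · exact Nat.mod_eq_of_lt (by omega)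
  rw [Fin.ext_iff, Fin.ext_iff]
  simp only [roc_mod_plus q hq i, roc_mod_minus q hq i, h3]
  split <;> split <;> split <;> omega

lemma roc_jp_ne_jm (q : ℕ) (hq : 3 ≤ q) (i : Fin q) :
    (⟨(i.val+1)%q, Nat.mod_lt _ (by omega)⟩ : Fin q) ≠ ⟨(i.val+q-1)%q, Nat.mod_lt _ (by omega)⟩ := by
  have hi := i.isLt
  simp only [ne_eq, Fin.mk.injEq, roc_mod_plus q hq i, roc_mod_minus q hq i]
  split <;> split <;> omega

lemma roc_adj_mulVec (b q : ℕ) (hq : 3 ≤ q) (v : Fin q × Fin b → ℝ) (i : Fin q) (a : Fin b) :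
    (rocAdj b q).mulVec v (i, a) =
      ((∑ c : Fin b, v (i, c)) - v (i, a)) +
      (if a.val = 0 then
        v (⟨(i.val+1)%q, Nat.mod_lt _ (by omega)⟩, a) + v (⟨(i.val+q-1)%q, Nat.mod_lt _ (by omega)⟩, a) else 0) := by
  set jp : Fin q := ⟨(i.val+1)%q, Nat.mod_lt _ (by omega)⟩ with hjp
  set jm : Fin q := ⟨(i.val+q-1)%q, Nat.mod_lt _ (by omega)⟩ with hjm
  simp only [Matrix.mulVec, dotProduct, rocAdj, Matrix.of_apply, add_mul, Finset.sum_add_distrib]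
  congr 1
  · rw [Fintype.sum_prod_type]
    rw [Finset.sum_eq_single i]
    · have hterm : ∀ c : Fin b, (if i = i ∧ a ≠ c then (1:ℝ) else 0) * v (i, c) =
          v (i, c) - (if c = a then v (i, c) else 0) := by
        intro c
        by_cases h : c = a <;> simp [h, Ne.symm]
      rw [Finset.sum_congr rfl fun c _ => hterm c]
      rw [Finset.sum_sub_distrib, Finset.sum_ite_eq']
      simp
    · intro j _ hji
      apply Finset.sum_eq_zero
      intro c _
      rw [if_neg, zero_mul]
      exact fun h => hji (h.1.symm ▸ rfl)
    · simp
  · rw [Fintype.sum_prod_type]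
    by_cases ha : a.val = 0
    · rw [if_pos ha]
      have key : ∀ j : Fin q, (∑ c : Fin b, (if ((i.val + 1) % q = j.val ∨ (j.val + 1) % q = i.val) ∧ a.val = 0 ∧ c.val = 0 then (1:ℝ) else 0) * v (j, c)) = (if j = jp ∨ j = jm then 1 else 0) * v (j, a) := by
        intro j
        rw [Finset.sum_eq_single a]
        · simp only [ha, and_true, true_and, and_self, roc_cyc_iff q hq i j, hjp, hjm]
        · intro c _ hca
          rw [if_neg, zero_mul]
          rintro ⟨-, -, hc0⟩
          exact hca (Fin.ext (by omega))
        · simp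
      simp only [key]
      rw [Finset.sum_eq_add_of_mem jp jm (Finset.mem_univ _) (Finset.mem_univ _) (roc_jp_ne_jm q hq i)]
      · simp
      · intro j _ hj
        rw [if_neg, zero_mul]
        tauto
    · rw [if_neg ha]
      apply Finset.sum_eq_zero; intro j _
      apply Finset.sum_eq_zero; intro c _
      rw [if_neg, zero_mul]
      rintro ⟨-, h0, -⟩; exact ha h0

lemma roc_sum_fin_ite (b : ℕ) (hb : 1 ≤ b) (P Q : ℝ) :
    ∑ c : Fin b, (if c.val = 0 then P else Q) = P + ((b:ℝ) - 1) * Q := by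
  have h : ∀ c : Fin b, (if c.val = 0 then P else Q) =
      Q + (if c = (⟨0, by omega⟩ : Fin b) then P - Q else 0) := by
    intro c
    by_cases h : c.val = 0
    · rw [if_pos h, if_pos (Fin.ext h)]; ring
    · rw [if_neg h, if_neg (fun hc => h (by rw [hc]))]; ring
  rw [Finset.sum_congr rfl fun c _ => h c, Finset.sum_add_distrib, Finset.sum_const,
    Finset.sum_ite_eq']
  simp [Finset.card_univ]
  ring

lemma roc_dmul_mulVec {n : Type*} [Fintype n] [DecidableEq n] (M : Matrix n n ℝ) (d : n → ℝ)
    (v : n → ℝ) (p : n) :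
    (Matrix.diagonal d * M * Matrix.diagonal d).mulVec v p =
      d p * M.mulVec (fun r => d r * v r) p := by
  simp only [Matrix.mulVec, dotProduct, Matrix.mul_diagonal, Matrix.diagonal_mul,
    Finset.mul_sum]
  exact Finset.sum_congr rfl fun r _ => by ring

lemma roc_ahat_eig (b q : ℕ) (hb : 3 ≤ b) (hq : 3 ≤ q) (ξ lam α : ℝ) (y : Fin q → ℝ)
    (hy : ∀ i : Fin q, y ⟨(i.val+1)%q, Nat.mod_lt _ (by omega)⟩ +
        y ⟨(i.val+q-1)%q, Nat.mod_lt _ (by omega)⟩ = α * y i)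
    (h1 : (1/Real.sqrt ((b:ℝ)-1)) * (ξ/Real.sqrt ((b:ℝ)+1) + ((b:ℝ)-2)/Real.sqrt ((b:ℝ)-1)) = lam)
    (h2 : (1/Real.sqrt ((b:ℝ)+1)) * (((b:ℝ)-1)/Real.sqrt ((b:ℝ)-1) + α*ξ/Real.sqrt ((b:ℝ)+1)) = lam * ξ) :
    (rocAhat b q).mulVec (vkron y (blockVec b ξ)) = lam • vkron y (blockVec b ξ) := by
  set u := Real.sqrt ((b:ℝ)+1) with hu
  set v := Real.sqrt ((b:ℝ)-1) with hv
  funext p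
  obtain ⟨i, a⟩ := p
  rw [rocAhat, roc_dmul_mulVec]
  have hw : (fun r : Fin q × Fin b => (1 / Real.sqrt (rocDeg b q r)) * vkron y (blockVec b ξ) r)
      = vkron y (fun c : Fin b => if c.val = 0 then ξ/u else 1/v) := by
    funext r
    simp only [vkron, blockVec, rocDeg]
    by_cases h : r.2.val = 0 <;> simp [h] <;> ring
  rw [hw, roc_adj_mulVec b q hq]
  have hsum : (∑ c : Fin b, vkron y (fun c : Fin b => if c.val = 0 then ξ/u else 1/v) (i, c))
      = y i * (ξ/u + ((b:ℝ)-1) * (1/v)) := by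
    simp only [vkron]
    rw [← Finset.mul_sum, roc_sum_fin_ite b (by omega)]
  rw [hsum]
  simp only [vkron, Pi.smul_apply, smul_eq_mul, blockVec, rocDeg]
  by_cases h : a.val = 0
  · rw [if_pos h, if_pos h, if_pos h, if_pos h]
    have hyi := hy i
    have expand : y ⟨(i.val+1)%q, Nat.mod_lt _ (by omega)⟩ * (ξ/u) +
        y ⟨(i.val+q-1)%q, Nat.mod_lt _ (by omega)⟩ * (ξ/u) = α * y i * (ξ/u) := by
      rw [← add_mul, hyi]
    rw [expand]
    simp only [← hu, ← hv]
    linear_combination (y i) * h2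
  · rw [if_neg h, if_neg h, if_neg h, if_neg h]
    simp only [← hu, ← hv]
    linear_combination (y i) * h1

lemma roc_arg_period (q k m : ℕ) (hq : 3 ≤ q) :
    2 * Real.pi * k * (((m % q : ℕ) : ℝ) + 1) / q + ((k * (m / q) : ℕ) : ℝ) * (2 * Real.pi)
      = 2 * Real.pi * k * ((m : ℝ) + 1) / q := by
  have hq0 : (q : ℝ) ≠ 0 := by positivity
  have hcast : ((m % q : ℕ) : ℝ) + (q : ℝ) * ((m / q : ℕ) : ℝ) = (m : ℝ) := by
    exact_mod_cast Nat.mod_add_div m q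
  push_cast
  field_simp
  linear_combination (k:ℝ) * hcast

lemma roc_cvec_shift (q k : ℕ) (hq : 3 ≤ q) (i : Fin q) :
    cvec q k ⟨(i.val+1)%q, Nat.mod_lt _ (by omega)⟩ +
      cvec q k ⟨(i.val+q-1)%q, Nat.mod_lt _ (by omega)⟩ = rocAlpha q k * cvec q k i := by
  have per : ∀ m : ℕ, Real.cos (2 * Real.pi * k * (((m % q : ℕ) : ℝ) + 1) / q)
      = Real.cos (2 * Real.pi * k * ((m : ℝ) + 1) / q) := by
    intro m
    rw [← roc_arg_period q k m hq, Real.cos_add_nat_mul_two_pi]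
  simp only [cvec]
  rw [per (i.val + 1), per (i.val + q - 1)]
  have hc1 : ((i.val + q - 1 : ℕ) : ℝ) + 1 = (i.val : ℝ) + q := by
    have : 1 ≤ i.val + q := by omega
    push_cast [Nat.cast_sub this]
    ring
  rw [hc1]
  have hc2 : 2 * Real.pi * k * ((i.val : ℝ) + q) / q
      = 2 * Real.pi * k * ((i.val : ℝ)) / q + (k : ℝ) * (2 * Real.pi) := by
    have hq0 : (q : ℝ) ≠ 0 := by positivity
    field_simp
  rw [hc2, Real.cos_add_nat_mul_two_pi]
  have e1 : 2 * Real.pi * k * (((i.val + 1 : ℕ) : ℝ) + 1) / q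
      = 2 * Real.pi * k * ((i.val : ℝ) + 1) / q + 2 * Real.pi * k / q := by
    push_cast; ring
  have e2 : 2 * Real.pi * k * ((i.val : ℝ)) / q
      = 2 * Real.pi * k * ((i.val : ℝ) + 1) / q - 2 * Real.pi * k / q := by
    ring
  rw [e1, e2, Real.cos_add, Real.cos_sub, rocAlpha]
  ring

lemma roc_svec_shift (q k : ℕ) (hq : 3 ≤ q) (i : Fin q) :
    svec q k ⟨(i.val+1)%q, Nat.mod_lt _ (by omega)⟩ +
      svec q k ⟨(i.val+q-1)%q, Nat.mod_lt _ (by omega)⟩ = rocAlpha q k * svec q k i := by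
  have per : ∀ m : ℕ, Real.sin (2 * Real.pi * k * (((m % q : ℕ) : ℝ) + 1) / q)
      = Real.sin (2 * Real.pi * k * ((m : ℝ) + 1) / q) := by
    intro m
    rw [← roc_arg_period q k m hq, Real.sin_add_nat_mul_two_pi]
  simp only [svec]
  rw [per (i.val + 1), per (i.val + q - 1)]
  have hc1 : ((i.val + q - 1 : ℕ) : ℝ) + 1 = (i.val : ℝ) + q := by
    have : 1 ≤ i.val + q := by omega
    push_cast [Nat.cast_sub this]
    ring
  rw [hc1]
  have hc2 : 2 * Real.pi * k * ((i.val : ℝ) + q) / q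
      = 2 * Real.pi * k * ((i.val : ℝ)) / q + (k : ℝ) * (2 * Real.pi) := by
    have hq0 : (q : ℝ) ≠ 0 := by positivity
    field_simp
  rw [hc2, Real.sin_add_nat_mul_two_pi]
  have e1 : 2 * Real.pi * k * (((i.val + 1 : ℕ) : ℝ) + 1) / q
      = 2 * Real.pi * k * ((i.val : ℝ) + 1) / q + 2 * Real.pi * k / q := by
    push_cast; ring
  have e2 : 2 * Real.pi * k * ((i.val : ℝ)) / q
      = 2 * Real.pi * k * ((i.val : ℝ) + 1) / q - 2 * Real.pi * k / q := by
    ring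
  rw [e1, e2, Real.sin_add, Real.sin_sub, rocAlpha]
  ring

lemma roc_scalar1 (b ξ : ℝ) (hb : 3 ≤ b) :
    (1/Real.sqrt (b-1)) * (ξ/Real.sqrt (b+1) + (b-2)/Real.sqrt (b-1))
      = ξ/Real.sqrt (b^2-1) + 1 - 1/(b-1) := by
  have hw : Real.sqrt (b^2-1) = Real.sqrt (b+1) * Real.sqrt (b-1) := by
    rw [show b^2 - 1 = (b+1)*(b-1) by ring, Real.sqrt_mul (by nlinarith)]
  have hu : Real.sqrt (b+1) ^ 2 = b + 1 := Real.sq_sqrt (by nlinarith)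
  have hv : Real.sqrt (b-1) ^ 2 = b - 1 := Real.sq_sqrt (by nlinarith)
  have hu0 : Real.sqrt (b+1) ≠ 0 := by
    have : (0:ℝ) < b + 1 := by nlinarith
    positivity
  have hv0 : Real.sqrt (b-1) ≠ 0 := by
    have : (0:ℝ) < b - 1 := by nlinarith
    positivity
  have hb1 : b - 1 ≠ 0 := by nlinarith
  rw [hw]
  field_simp
  linear_combination (-(b-2) * Real.sqrt (b+1)) * hv

lemma roc_scalar2 (b α β ξ : ℝ) (hb : 3 ≤ b)
    (hbeta : 2*β*(Real.sqrt (b+1)*Real.sqrt (b-1)) = α*(b-1) - (b-2)*(b+1))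
    (hquad : ξ^2 = 2*β*ξ + (b-1)) :
    (1/Real.sqrt (b+1)) * ((b-1)/Real.sqrt (b-1) + α*ξ/Real.sqrt (b+1))
      = (ξ/Real.sqrt (b^2-1) + 1 - 1/(b-1)) * ξ := by
  have hw : Real.sqrt (b^2-1) = Real.sqrt (b+1) * Real.sqrt (b-1) := by
    rw [show b^2 - 1 = (b+1)*(b-1) by ring, Real.sqrt_mul (by nlinarith)]
  have hu : Real.sqrt (b+1) ^ 2 = b + 1 := Real.sq_sqrt (by nlinarith)
  have hv : Real.sqrt (b-1) ^ 2 = b - 1 := Real.sq_sqrt (by nlinarith)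
  have hu0 : Real.sqrt (b+1) ≠ 0 := by
    have : (0:ℝ) < b + 1 := by nlinarith
    positivity
  have hv0 : Real.sqrt (b-1) ≠ 0 := by
    have : (0:ℝ) < b - 1 := by nlinarith
    positivity
  have hb1 : b - 1 ≠ 0 := by nlinarith
  rw [hw]
  field_simp
  linear_combination (-(Real.sqrt (b-1)*ξ))*hbeta + ((1-b)*Real.sqrt (b+1))*hquad + ((2-b)*Real.sqrt (b-1)*ξ)*hu + (2*β*ξ*Real.sqrt (b+1))*hv

lemma roc_hbeta_key (b q k : ℕ) (hb : 3 ≤ b) :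
    2*(rocBeta b q k)*(Real.sqrt ((b:ℝ)+1)*Real.sqrt ((b:ℝ)-1))
      = rocAlpha q k*((b:ℝ)-1) - ((b:ℝ)-2)*((b:ℝ)+1) := by
  have hb' : (3:ℝ) ≤ (b:ℝ) := by exact_mod_cast hb
  have hw : Real.sqrt ((b:ℝ)^2-1) = Real.sqrt ((b:ℝ)+1) * Real.sqrt ((b:ℝ)-1) := by
    rw [show (b:ℝ)^2 - 1 = ((b:ℝ)+1)*((b:ℝ)-1) by ring, Real.sqrt_mul (by nlinarith)]
  have hu : Real.sqrt ((b:ℝ)+1) ^ 2 = (b:ℝ) + 1 := Real.sq_sqrt (by nlinarith)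
  have hv : Real.sqrt ((b:ℝ)-1) ^ 2 = (b:ℝ) - 1 := Real.sq_sqrt (by nlinarith)
  have hu0 : Real.sqrt ((b:ℝ)+1) ≠ 0 := by
    have : (0:ℝ) < (b:ℝ) + 1 := by nlinarith
    positivity
  have hv0 : Real.sqrt ((b:ℝ)-1) ≠ 0 := by
    have : (0:ℝ) < (b:ℝ) - 1 := by nlinarith
    positivity
  rw [rocBeta, Real.sqrt_div' ((b:ℝ)-1) (by nlinarith), Real.sqrt_div' ((b:ℝ)+1) (by nlinarith), hw]
  field_simp
  linear_combination (rocAlpha q k - ((b:ℝ)+1))*hv + (1 - Real.sqrt ((b:ℝ)-1)^2)*hu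

lemma roc_hquad1 (b q k : ℕ) (hb : 3 ≤ b) :
    (rocXi1 b q k)^2 = 2*(rocBeta b q k)*(rocXi1 b q k) + ((b:ℝ)-1) := by
  have hb' : (3:ℝ) ≤ (b:ℝ) := by exact_mod_cast hb
  have hs : Real.sqrt ((rocBeta b q k)^2 + ((b:ℝ)-1)) ^ 2 = (rocBeta b q k)^2 + ((b:ℝ)-1) :=
    Real.sq_sqrt (by nlinarith [sq_nonneg (rocBeta b q k)])
  rw [rocXi1]
  linear_combination hs

lemma roc_hquad2 (b q k : ℕ) (hb : 3 ≤ b) :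
    (rocXi2 b q k)^2 = 2*(rocBeta b q k)*(rocXi2 b q k) + ((b:ℝ)-1) := by
  have hb' : (3:ℝ) ≤ (b:ℝ) := by exact_mod_cast hb
  have hs : Real.sqrt ((rocBeta b q k)^2 + ((b:ℝ)-1)) ^ 2 = (rocBeta b q k)^2 + ((b:ℝ)-1) :=
    Real.sq_sqrt (by nlinarith [sq_nonneg (rocBeta b q k)])
  rw [rocXi2]
  linear_combination hs

lemma roc_cvec_ne (q k : ℕ) (hq : 3 ≤ q) : cvec q k ⟨q-1, by omega⟩ ≠ 0 := by
  have hq0 : ((q:ℝ)) ≠ 0 := by positivity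
  have h1 : (((q-1 : ℕ)):ℝ) + 1 = (q:ℝ) := by
    push_cast [Nat.cast_sub (by omega : 1 ≤ q)]
    ring
  simp only [cvec, h1]
  rw [show 2 * Real.pi * (k:ℝ) * (q:ℝ) / (q:ℝ) = (k:ℝ) * (2*Real.pi) by field_simp,
    Real.cos_nat_mul_two_pi]
  norm_num

lemma roc_svec_ne (q k : ℕ) (hq : 3 ≤ q) (hk1 : 1 ≤ k) (h2k : 2*k < q) :
    svec q k ⟨0, by omega⟩ ≠ 0 := by
  have hk' : (0:ℝ) < (k:ℝ) := by exact_mod_cast hk1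
  have hq' : (0:ℝ) < (q:ℝ) := by positivity
  have harg : svec q k ⟨0, by omega⟩ = Real.sin (2*Real.pi*(k:ℝ)/(q:ℝ)) := by
    simp [svec]
  rw [harg]
  have hpos : 0 < 2*Real.pi*(k:ℝ)/(q:ℝ) := by positivity
  have hlt : 2*Real.pi*(k:ℝ)/(q:ℝ) < Real.pi := by
    rw [div_lt_iff₀ hq']
    have h2k' : 2*(k:ℝ) < (q:ℝ) := by exact_mod_cast h2k
    nlinarith [Real.pi_pos]
  exact (Real.sin_pos_of_pos_of_lt_pi hpos hlt).ne'

lemma roc_vkron_ne_zero (b q : ℕ) (hb : 3 ≤ b) (y : Fin q → ℝ) (j : Fin q)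
    (hy : y j ≠ 0) (ξ : ℝ) : vkron y (blockVec b ξ) ≠ 0 := by
  intro h
  have h2 := congrFun h (j, (⟨1, by omega⟩ : Fin b))
  simp [vkron, blockVec] at h2
  exact hy h2

end rocAux

/-- For `k = 1, …, ⌈q/2⌉ − 1`, the four vectors
`c^{k,q} ⊗ (ξᵢ⁽ᵏ⁾e₁ + g₁)` and `s^{k,q} ⊗ (ξᵢ⁽ᵏ⁾e₁ + g₁)` (`i = 1, 2`) are nonzero
eigenvectors of `Â` for the eigenvalues `λᵢ⁽ᵏ⁾`. -/
theorem roc_interior_signal_eigenpairs (b q : ℕ) (hb : 3 ≤ b) (hq : 3 ≤ q)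
    (k : ℕ) (hk1 : 1 ≤ k) (hk2 : k ≤ (q + 1) / 2 - 1) :
    (vkron (cvec q k) (blockVec b (rocXi1 b q k)) ≠ 0 ∧
     vkron (svec q k) (blockVec b (rocXi1 b q k)) ≠ 0 ∧
     vkron (cvec q k) (blockVec b (rocXi2 b q k)) ≠ 0 ∧
     vkron (svec q k) (blockVec b (rocXi2 b q k)) ≠ 0) ∧
    (rocAhat b q).mulVec (vkron (cvec q k) (blockVec b (rocXi1 b q k))) =
      rocLam1 b q k • vkron (cvec q k) (blockVec b (rocXi1 b q k)) ∧
    (rocAhat b q).mulVec (vkron (svec q k) (blockVec b (rocXi1 b q k))) =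
      rocLam1 b q k • vkron (svec q k) (blockVec b (rocXi1 b q k)) ∧
    (rocAhat b q).mulVec (vkron (cvec q k) (blockVec b (rocXi2 b q k))) =
      rocLam2 b q k • vkron (cvec q k) (blockVec b (rocXi2 b q k)) ∧
    (rocAhat b q).mulVec (vkron (svec q k) (blockVec b (rocXi2 b q k))) =
      rocLam2 b q k • vkron (svec q k) (blockVec b (rocXi2 b q k)) := by
  have h2k : 2*k < q := by omega
  have hb' : (3:ℝ) ≤ (b:ℝ) := by exact_mod_cast hb
  have hcne : cvec q k ⟨q-1, by omega⟩ ≠ 0 := roc_cvec_ne q k hq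
  have hsne : svec q k ⟨0, by omega⟩ ≠ 0 := roc_svec_ne q k hq hk1 h2k
  have H1a : (1/Real.sqrt ((b:ℝ)-1)) * (rocXi1 b q k/Real.sqrt ((b:ℝ)+1) +
      ((b:ℝ)-2)/Real.sqrt ((b:ℝ)-1)) = rocLam1 b q k := by
    simp only [rocLam1]
    exact roc_scalar1 (b:ℝ) (rocXi1 b q k) hb'
  have H1b : (1/Real.sqrt ((b:ℝ)+1)) * (((b:ℝ)-1)/Real.sqrt ((b:ℝ)-1) +
      rocAlpha q k*(rocXi1 b q k)/Real.sqrt ((b:ℝ)+1)) = rocLam1 b q k * rocXi1 b q k := by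
    simp only [rocLam1]
    exact roc_scalar2 (b:ℝ) (rocAlpha q k) (rocBeta b q k) (rocXi1 b q k) hb'
      (roc_hbeta_key b q k hb) (roc_hquad1 b q k hb)
  have H2a : (1/Real.sqrt ((b:ℝ)-1)) * (rocXi2 b q k/Real.sqrt ((b:ℝ)+1) +
      ((b:ℝ)-2)/Real.sqrt ((b:ℝ)-1)) = rocLam2 b q k := by
    simp only [rocLam2]
    exact roc_scalar1 (b:ℝ) (rocXi2 b q k) hb'
  have H2b : (1/Real.sqrt ((b:ℝ)+1)) * (((b:ℝ)-1)/Real.sqrt ((b:ℝ)-1) +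
      rocAlpha q k*(rocXi2 b q k)/Real.sqrt ((b:ℝ)+1)) = rocLam2 b q k * rocXi2 b q k := by
    simp only [rocLam2]
    exact roc_scalar2 (b:ℝ) (rocAlpha q k) (rocBeta b q k) (rocXi2 b q k) hb'
      (roc_hbeta_key b q k hb) (roc_hquad2 b q k hb)
  refine ⟨⟨roc_vkron_ne_zero b q hb _ _ hcne _, roc_vkron_ne_zero b q hb _ _ hsne _,
      roc_vkron_ne_zero b q hb _ _ hcne _, roc_vkron_ne_zero b q hb _ _ hsne _⟩, ?_, ?_, ?_, ?_⟩
  · exact roc_ahat_eig b q hb hq _ _ (rocAlpha q k) (cvec q k)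
      (fun i => roc_cvec_shift q k hq i) H1a H1b
  · exact roc_ahat_eig b q hb hq _ _ (rocAlpha q k) (svec q k)
      (fun i => roc_svec_shift q k hq i) H1a H1b
  · exact roc_ahat_eig b q hb hq _ _ (rocAlpha q k) (cvec q k)
      (fun i => roc_cvec_shift q k hq i) H2a H2b
  · exact roc_ahat_eig b q hb hq _ _ (rocAlpha q k) (svec q k)
      (fun i => roc_svec_shift q k hq i) H2a H2b
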